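/- For every real number x with 0 < x, log(x) = ∑_{n=1}^{∞} ∑_{m=1}^{2^n - 1} (-1)^{m+1} (x - 1)/(2^n + m·(x - 1)), where for each n the inner sum is finite and the outer series over n converges. (In particular each denominator 2^n + m(x-1) is nonzero since m ≤ 2^n - 1 and x > 0.) -/

import Mathlib

open Finset Filter Real

private lemma sum_range_two_mul' (K : ℕ) (h : ℕ → ℝ) :
    ∑ m ∈ range (2*K), h m = ∑ i ∈ range K, (h (2*i) + h (2*i+1)) := by
  induction K with
  | zero => simp
  | succ k ih =>
    rw [show 2*(k+1) = (2*k+1)+1 by ring, sum_range_succ, sum_range_succ,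
      sum_range_succ, ih]
    ring

private lemma icc_to_range (K : ℕ) (h : ℕ → ℝ) :
    ∑ m ∈ Icc (1:ℕ) K, h m = ∑ i ∈ range K, h (i+1) := by
  rw [← Finset.Ico_add_one_right_eq_Icc, Finset.sum_Ico_eq_sum_range]
  simp [Nat.add_comm]

private lemma step_lemma (x : ℝ) (N : ℕ) :
    (∑ m ∈ Icc (1:ℕ) (2^N - 1), (x-1)/((2:ℝ)^N + (m:ℝ)*(x-1)))
      + ∑ m ∈ Icc (1:ℕ) (2^(N+1) - 1), (-1:ℝ)^(m+1) * (x-1)/(2^(N+1) + (m:ℝ)*(x-1))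
    = ∑ m ∈ Icc (1:ℕ) (2^(N+1) - 1), (x-1)/((2:ℝ)^(N+1) + (m:ℝ)*(x-1)) := by
  have key : ∑ m ∈ Icc (1:ℕ) (2^(N+1)-1),
      ((x-1)/((2:ℝ)^(N+1) + (m:ℝ)*(x-1)) - (-1:ℝ)^(m+1) * (x-1)/((2:ℝ)^(N+1) + (m:ℝ)*(x-1)))
      = ∑ m ∈ Icc (1:ℕ) (2^N - 1), (x-1)/((2:ℝ)^N + (m:ℝ)*(x-1)) := by
    set h : ℕ → ℝ := fun m =>
      (x-1)/((2:ℝ)^(N+1) + (m:ℝ)*(x-1)) - (-1:ℝ)^(m+1) * (x-1)/((2:ℝ)^(N+1) + (m:ℝ)*(x-1))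
      with hh
    rw [icc_to_range, icc_to_range]
    have h0 : ∑ m ∈ range (2^(N+1)), h m = (∑ i ∈ range (2^(N+1) - 1), h (i+1)) + h 0 := by
      rw [show (2:ℕ)^(N+1) = (2^(N+1) - 1) + 1 from
        (Nat.succ_pred_eq_of_pos (by positivity)).symm, sum_range_succ']
      simp
    have h2 : ∑ m ∈ range (2^(N+1)), h m = ∑ j ∈ range (2^N), h (2*j) := by
      rw [pow_succ, mul_comm ((2:ℕ)^N) 2, sum_range_two_mul']
      apply Finset.sum_congr rfl
      intro j _
      have hpow : (-1:ℝ)^(2*j+1+1) = 1 := by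
        rw [show 2*j+1+1 = 2*(j+1) by ring, pow_mul]; norm_num
      have hodd : h (2*j+1) = 0 := by
        simp only [hh, hpow, one_mul, sub_self]
      rw [hodd, add_zero]
    have h3 : ∑ j ∈ range (2^N), h (2*j) = (∑ j ∈ range (2^N - 1), h (2*(j+1))) + h (2*0) := by
      rw [show (2:ℕ)^N = (2^N - 1) + 1 from
        (Nat.succ_pred_eq_of_pos (by positivity)).symm, sum_range_succ']
      simp
    have h4 : h 0 = h (2*0) := by norm_num
    have h5 : ∑ i ∈ range (2^(N+1) - 1), h (i+1) = ∑ j ∈ range (2^N - 1), h (2*(j+1)) := by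
      have := h0.symm.trans (h2.trans h3)
      rw [← h4] at this
      linarith
    rw [h5]
    apply Finset.sum_congr rfl
    intro j _
    have hpow : (-1:ℝ)^(2*(j+1)+1) = -1 := by
      rw [pow_succ, pow_mul]; norm_num
    have hD : (2:ℝ)^(N+1) + ((2*(j+1):ℕ):ℝ)*(x-1)
        = 2*((2:ℝ)^N + ((j+1:ℕ):ℝ)*(x-1)) := by push_cast; ring
    simp only [hh, hpow, neg_one_mul, hD, neg_div, sub_neg_eq_add, ← add_div]
    rw [show (x-1) + (x-1) = 2*(x-1) by ring, mul_div_mul_left _ _ (two_ne_zero)]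
  rw [Finset.sum_sub_distrib] at key
  linarith [key]

private lemma partial_sum_eq (x : ℝ) (N : ℕ) :
    ∑ n ∈ Finset.Icc (1:ℕ) N, ∑ m ∈ Finset.Icc (1:ℕ) (2 ^ n - 1),
        (-1 : ℝ) ^ (m + 1) * (x - 1) / (2 ^ n + (m:ℝ) * (x - 1))
    = ∑ m ∈ Icc (1:ℕ) (2^N - 1), (x-1)/((2:ℝ)^N + (m:ℝ)*(x-1)) := by
  induction N with
  | zero => simp
  | succ k ih =>
    rw [Finset.sum_Icc_succ_top (by omega : 1 ≤ k+1), ih, step_lemma]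

private lemma log_err (a b : ℝ) (ha : 0 < a) (hb : 0 < b) :
    |(b - a)/a - (Real.log b - Real.log a)| ≤ (b-a)^2/(a*b) := by
  have h1 : Real.log b - Real.log a ≤ (b-a)/a := by
    have h := Real.log_le_sub_one_of_pos (div_pos hb ha)
    rw [Real.log_div hb.ne' ha.ne'] at h
    have : b/a - 1 = (b-a)/a := by field_simp
    linarith
  have h2 : (b-a)/b ≤ Real.log b - Real.log a := by
    have h := Real.log_le_sub_one_of_pos (div_pos ha hb)
    rw [Real.log_div ha.ne' hb.ne'] at h
    have : a/b - 1 = (a-b)/b := by field_simp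
    have : (b-a)/b = -((a-b)/b) := by ring
    rw [this]
    linarith
  have heq : (b-a)/a - (b-a)/b = (b-a)^2/(a*b) := by
    field_simp
  rw [abs_of_nonneg (by linarith)]
  linarith

private lemma dpos (x : ℝ) (hx : 0 < x) (N i : ℕ) (h2 : i ≤ 2^N) :
    (2:ℝ)^N * min 1 x ≤ (2:ℝ)^N + (i:ℝ)*(x-1) := by
  have hi : (i:ℝ) ≤ (2:ℝ)^N := by
    have := (Nat.cast_le (α := ℝ)).mpr h2
    push_cast at this
    exact this
  have hi0 : (0:ℝ) ≤ (i:ℝ) := Nat.cast_nonneg i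
  rcases min_cases 1 x with ⟨hm, hm2⟩ | ⟨hm, hm2⟩ <;> rw [hm] <;> nlinarith

private lemma key_bound (x : ℝ) (hx : 0 < x) (N : ℕ) :
    |(∑ m ∈ Icc (1:ℕ) (2^N - 1), (x-1)/((2:ℝ)^N + (m:ℝ)*(x-1)))
      - (Real.log ((2:ℝ)^N * x) - Real.log ((2:ℝ)^N + (x-1)))|
    ≤ (x-1)^2 / ((2:ℝ)^N * (min 1 x)^2) := by
  set ε := min 1 x with hε
  have hε0 : 0 < ε := lt_min one_pos hx
  have hp : (0:ℝ) < (2:ℝ)^N := by positivity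
  set F : ℕ → ℝ := fun j => Real.log ((2:ℝ)^N + ((j:ℝ)+1)*(x-1)) with hF
  have hone : (1:ℕ) ≤ 2^N := Nat.one_le_two_pow
  have htel : ∑ j ∈ range (2^N - 1), (F (j+1) - F j) = F (2^N - 1) - F 0 :=
    Finset.sum_range_sub F _
  have hFtop : F (2^N - 1) = Real.log ((2:ℝ)^N * x) := by
    simp only [hF]
    congr 1
    have : ((2^N - 1 : ℕ):ℝ) = (2:ℝ)^N - 1 := by push_cast [hone]; ring
    rw [this]; ring
  have hF0 : F 0 = Real.log ((2:ℝ)^N + (x-1)) := by simp [hF]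
  rw [← hFtop, ← hF0, ← htel, icc_to_range, ← Finset.sum_sub_distrib]
  refine le_trans (Finset.abs_sum_le_sum_abs _ _) ?_
  have hbound : ∀ j ∈ range (2^N - 1),
      |(x-1)/((2:ℝ)^N + ((j+1:ℕ):ℝ)*(x-1)) - (F (j+1) - F j)|
        ≤ (x-1)^2 / ((2:ℝ)^N * ε * ((2:ℝ)^N * ε)) := by
    intro j hj
    rw [Finset.mem_range] at hj
    set a := (2:ℝ)^N + ((j:ℝ)+1)*(x-1) with ha'
    set b := (2:ℝ)^N + ((j:ℝ)+2)*(x-1) with hb'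
    have haε : (2:ℝ)^N * ε ≤ a := by
      have := dpos x hx N (j+1) (by omega)
      push_cast at this; linarith [this]
    have hbε : (2:ℝ)^N * ε ≤ b := by
      have := dpos x hx N (j+2) (by omega)
      push_cast at this; linarith [this]
    have ha : 0 < a := lt_of_lt_of_le (by positivity) haε
    have hb : 0 < b := lt_of_lt_of_le (by positivity) hbε
    have hba : b - a = x - 1 := by rw [ha', hb']; ring
    have := log_err a b ha hb
    rw [hba] at this
    have hterm : (x-1)/((2:ℝ)^N + ((j+1:ℕ):ℝ)*(x-1)) - (F (j+1) - F j)
        = (x-1)/a - (Real.log b - Real.log a) := by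
      simp only [hF, ha', hb']
      push_cast
      ring_nf
    rw [hterm]
    refine le_trans this ?_
    apply div_le_div_of_nonneg_left (by positivity) (by positivity)
    exact mul_le_mul haε hbε (by positivity) ha.le
  refine le_trans (Finset.sum_le_sum hbound) ?_
  rw [Finset.sum_const, Finset.card_range, nsmul_eq_mul]
  have hcard : ((2^N - 1 : ℕ):ℝ) ≤ (2:ℝ)^N := by
    push_cast [hone]; linarith
  have hBpos : (0:ℝ) ≤ (x-1)^2 / ((2:ℝ)^N * ε * ((2:ℝ)^N * ε)) := by positivity
  calc ((2^N - 1 : ℕ):ℝ) * ((x-1)^2 / ((2:ℝ)^N * ε * ((2:ℝ)^N * ε)))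
      ≤ (2:ℝ)^N * ((x-1)^2 / ((2:ℝ)^N * ε * ((2:ℝ)^N * ε))) := by
        apply mul_le_mul_of_nonneg_right hcard hBpos
    _ = (x-1)^2 / ((2:ℝ)^N * ε^2) := by field_simp

private lemma tendsto_aux (x : ℝ) (hx : 0 < x) :
    Tendsto (fun N : ℕ => ∑ m ∈ Icc (1:ℕ) (2^N - 1), (x-1)/((2:ℝ)^N + (m:ℝ)*(x-1)))
      atTop (nhds (Real.log x)) := by
  set ε := min 1 x with hε
  have hε0 : 0 < ε := lt_min one_pos hx
  have ht : Tendsto (fun N : ℕ => (x-1)/(2:ℝ)^N) atTop (nhds 0) := by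
    have h2 := tendsto_pow_atTop_nhds_zero_of_lt_one
      (by norm_num : (0:ℝ) ≤ 1/2) (by norm_num : (1/2:ℝ) < 1)
    have := h2.const_mul (x-1)
    rw [mul_zero] at this
    refine this.congr (fun N => ?_)
    rw [div_pow, one_pow, one_div, mul_comm, inv_mul_eq_div]
  set c : ℕ → ℝ := fun N => Real.log ((2:ℝ)^N * x) - Real.log ((2:ℝ)^N + (x-1)) with hc
  have hceq : ∀ N : ℕ, c N = Real.log x - Real.log (1 + (x-1)/(2:ℝ)^N) := by
    intro N
    have hp : (0:ℝ) < (2:ℝ)^N := by positivity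
    have hsplit : (2:ℝ)^N + (x-1) = (2:ℝ)^N * (1 + (x-1)/(2:ℝ)^N) := by field_simp
    simp only [hc]
    have h1 : (1:ℝ) ≤ (2:ℝ)^N := by exact_mod_cast Nat.one_le_two_pow (n := N)
    have hpos : (0:ℝ) < 1 + (x-1)/(2:ℝ)^N := by
      have : (1:ℝ) + (x-1)/(2:ℝ)^N = ((2:ℝ)^N + (x-1))/(2:ℝ)^N := by field_simp
      rw [this]
      apply div_pos _ hp
      nlinarith
    rw [Real.log_mul hp.ne' hx.ne', hsplit, Real.log_mul hp.ne' hpos.ne']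
    ring
  have hclim : Tendsto c atTop (nhds (Real.log x)) := by
    have hlog1 : Tendsto (fun N : ℕ => Real.log (1 + (x-1)/(2:ℝ)^N)) atTop (nhds 0) := by
      have h1 : Tendsto (fun N : ℕ => 1 + (x-1)/(2:ℝ)^N) atTop (nhds 1) := by
        have h1 : Tendsto (fun N : ℕ => 1 + (x-1)/(2:ℝ)^N) atTop (nhds (1+0)) :=
          Tendsto.add tendsto_const_nhds ht
        rwa [add_zero] at h1
      have := ((Real.continuousAt_log one_ne_zero).tendsto.comp h1)
      rwa [Real.log_one] at this
    have := (tendsto_const_nhds (x := Real.log x) (f := atTop (α := ℕ))).sub hlog1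
    rw [sub_zero] at this
    exact this.congr (fun N => (hceq N).symm)
  have hdiff : Tendsto (fun N : ℕ =>
      (∑ m ∈ Icc (1:ℕ) (2^N - 1), (x-1)/((2:ℝ)^N + (m:ℝ)*(x-1))) - c N)
      atTop (nhds 0) := by
    apply squeeze_zero_norm (a := fun N : ℕ => (x-1)^2/ε^2 * (1/2)^N)
    · intro N
      rw [Real.norm_eq_abs]
      refine le_trans (key_bound x hx N) (le_of_eq ?_)
      rw [div_pow, one_pow, div_mul_div_comm, mul_one, mul_comm ((min 1 x)^2)]
    · have h2 := tendsto_pow_atTop_nhds_zero_of_lt_one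
        (by norm_num : (0:ℝ) ≤ 1/2) (by norm_num : (1/2:ℝ) < 1)
      have := h2.const_mul ((x-1)^2/ε^2)
      rwa [mul_zero] at this
  have := hclim.add hdiff
  rw [add_zero] at this
  exact this.congr (fun N => by ring)

theorem stmt_10 (x : ℝ) (hx : 0 < x) :
    ∃ S : ℝ,
      Filter.Tendsto
        (fun N : ℕ => ∑ n ∈ Finset.Icc (1:ℕ) N, ∑ m ∈ Finset.Icc (1:ℕ) (2 ^ n - 1),
          (-1 : ℝ) ^ (m + 1) * (x - 1) / (2 ^ n + (m:ℝ) * (x - 1)))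
        Filter.atTop (nhds S) ∧
      Real.log x = S := by
  refine ⟨Real.log x, ?_, rfl⟩
  have heq : (fun N : ℕ => ∑ n ∈ Finset.Icc (1:ℕ) N, ∑ m ∈ Finset.Icc (1:ℕ) (2 ^ n - 1),
      (-1 : ℝ) ^ (m + 1) * (x - 1) / (2 ^ n + (m:ℝ) * (x - 1)))
      = fun N : ℕ => ∑ m ∈ Icc (1:ℕ) (2^N - 1), (x-1)/((2:ℝ)^N + (m:ℝ)*(x-1)) :=
    funext (partial_sum_eq x)
  rw [heq]
  exact tendsto_aux x hx
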